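/- For any graph G with at least one edge and with fractional chromatic index c_f, cms(G) ≤ |E(G)|/c_f. -/

import Mathlib

open SimpleGraph

/-- Two edges are adjacent if they are distinct and share a vertex. -/
def EdgesAdj {V : Type*} (e e' : Sym2 V) : Prop :=
  e ≠ e' ∧ ∃ v : V, v ∈ e ∧ v ∈ e'

/-- `ms` of an ordering of a graph, the ordering being given as the list of edges
in increasing label order: the largest `s ∈ {1,…,m}` such that any ordered pair of
adjacent edges `(e,e')` with `ℓ(e) < ℓ(e')` has forward distance at least `s`. -/
noncomputable def msList {V : Type*} (L : List (Sym2 V)) : ℕ :=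
  sSup {s | 1 ≤ s ∧ s ≤ L.length ∧ ∀ i j e e', i < j →
    L[i]? = some e → L[j]? = some e' → EdgesAdj e e' → s ≤ j - i}

/-- `cms` of an ordering of a graph: the largest `s ∈ {1,…,m}` such that every pair of
adjacent edges is at cyclic distance at least `s`. -/
noncomputable def cmsList {V : Type*} (L : List (Sym2 V)) : ℕ :=
  sSup {s | 1 ≤ s ∧ s ≤ L.length ∧ ∀ i j e e', i < j →
    L[i]? = some e → L[j]? = some e' → EdgesAdj e e' →
    s ≤ min (j - i) (L.length - (j - i))}

/-- `L` is an ordering of `G`: it lists every edge of `G` exactly once. -/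
def IsOrdering {V : Type*} (G : SimpleGraph V) (L : List (Sym2 V)) : Prop :=
  L.Nodup ∧ ∀ e, e ∈ L ↔ e ∈ G.edgeSet

/-- Cyclic matching sequenceability of a graph: the maximum of `cmsList` over orderings. -/
noncomputable def cms {V : Type*} (G : SimpleGraph V) : ℕ :=
  sSup {k | ∃ L, IsOrdering G L ∧ cmsList L = k}

/-- Number of edges of a graph. -/
noncomputable def numEdges {V : Type*} (G : SimpleGraph V) : ℕ :=
  Nat.card G.edgeSet

/-- The chromatic index: the least number of colours in a proper edge colouring. -/
noncomputable def chromaticIndex {V : Type*} (G : SimpleGraph V) : ℕ :=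
  sInf {c | ∃ f : G.edgeSet → Fin c, ∀ e e' : G.edgeSet, EdgesAdj e.1 e'.1 → f e ≠ f e'}

/-- The edge set of `G` forms a matching (no two distinct edges share a vertex). -/
def IsMatchingGraph {V : Type*} (G : SimpleGraph V) : Prop :=
  ∀ e ∈ G.edgeSet, ∀ e' ∈ G.edgeSet, ¬ EdgesAdj e e'

/-- `G` is regular of degree `d`. -/
def IsRegularGraph {V : Type*} (G : SimpleGraph V) (d : ℕ) : Prop :=
  ∀ v : V, Nat.card (G.neighborSet v) = d

/-- A finite set of edges of `G` forming a matching. -/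
def IsMatchingSet {V : Type*} (G : SimpleGraph V) (M : Finset (Sym2 V)) : Prop :=
  ↑M ⊆ G.edgeSet ∧ ∀ e ∈ M, ∀ e' ∈ M, ¬ EdgesAdj e e'

/-- The matching number of a graph. -/
noncomputable def matchingNumber {V : Type*} (G : SimpleGraph V) : ℕ :=
  sSup {k | ∃ M : Finset (Sym2 V), IsMatchingSet G M ∧ M.card = k}
/-- A fractional edge colouring of `G`, given as a nonnegative weight function on finite
edge sets which vanishes outside the matchings of `G`, such that for every edge `e` of `G`
the total weight of the matchings containing `e` is at least `1`. -/
def IsFracEdgeColouring {V : Type*} [Fintype V] [DecidableEq V] (G : SimpleGraph V)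
    (w : Finset (Sym2 V) → ℝ) : Prop :=
  (∀ M, 0 ≤ w M) ∧ (∀ M, ¬ IsMatchingSet G M → w M = 0) ∧
  ∀ e ∈ G.edgeSet, 1 ≤ ∑ M ∈ Finset.univ.filter (fun M : Finset (Sym2 V) => e ∈ M), w M

/-- The fractional chromatic index: the infimum of the weights of fractional edge
colourings. -/
noncomputable def fracChromaticIndex {V : Type*} [Fintype V] [DecidableEq V]
    (G : SimpleGraph V) : ℝ :=
  sInf {x | ∃ w : Finset (Sym2 V) → ℝ,
    IsFracEdgeColouring G w ∧ ∑ M : Finset (Sym2 V), w M = x}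

section CmsAux

lemma cms_arith_lt {m s t t' i a b : ℕ} (hm : 0 < m) (hs : s ≤ m) (ht : t < s) (ht' : t' < s)
    (ha : a = (i + t) % m) (hb : b = (i + t') % m) (hab : a < b) :
    min (b - a) (m - (b - a)) < s := by
  rcases le_or_gt t t' with h | h
  · have hb' : b = (a + (t' - t)) % m := by
      subst ha hb; rw [Nat.mod_add_mod]; congr 1; omega
    have ha' : a < m := ha ▸ Nat.mod_lt _ hm
    rcases Nat.lt_or_ge (a + (t' - t)) m with h2 | h2
    · rw [Nat.mod_eq_of_lt h2] at hb'
      exact lt_of_le_of_lt (min_le_left _ _) (by omega)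
    · have : b = a + (t' - t) - m := by
        rw [hb', Nat.mod_eq_sub_mod h2, Nat.mod_eq_of_lt (by omega)]
      omega
  · have ha2 : a = (b + (t - t')) % m := by
      subst ha hb; rw [Nat.mod_add_mod]; congr 1; omega
    have hb2 : b < m := hb ▸ Nat.mod_lt _ hm
    rcases Nat.lt_or_ge (b + (t - t')) m with h2 | h2
    · rw [Nat.mod_eq_of_lt h2] at ha2; omega
    · have : a = b + (t - t') - m := by
        rw [ha2, Nat.mod_eq_sub_mod h2, Nat.mod_eq_of_lt (by omega)]
      exact lt_of_le_of_lt (min_le_right _ _) (by omega)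

lemma cms_cancel {m x d : ℕ} (h : (x + d) % m = x % m) (hd : d < m) : d = 0 := by
  have h2 : x + d ≡ x + 0 [MOD m] := by simpa [Nat.ModEq] using h
  have h3 : d ≡ 0 [MOD m] := Nat.ModEq.add_left_cancel' x h2
  exact Nat.eq_zero_of_dvd_of_lt ((Nat.modEq_zero_iff_dvd).mp h3) hd

lemma cms_arith_inj {m s t t' j : ℕ} (hm : 0 < m) (hs : s ≤ m) (ht : t < s) (ht' : t' < s)
    (h : (j + m - t) % m = (j + m - t') % m) : t = t' := by
  rcases le_or_gt t t' with hle | hle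
  · have he : j + m - t = (j + m - t') + (t' - t) := by omega
    rw [he] at h
    have := cms_cancel h (by omega)
    omega
  · have he : j + m - t' = (j + m - t) + (t - t') := by omega
    rw [he] at h
    have := cms_cancel h.symm (by omega)
    omega

lemma edgesAdj_symm {V : Type*} {e e' : Sym2 V} (h : EdgesAdj e e') : EdgesAdj e' e := by
  obtain ⟨hne, v, hv, hv'⟩ := h
  exact ⟨hne.symm, v, hv', hv⟩

end CmsAux

/-- For any graph `G` with at least one edge and fractional chromatic index `c_f`,
`cms(G) ≤ |E(G)|/c_f`. -/
theorem cms_le_div_fracChromaticIndex {V : Type*} [Fintype V] [DecidableEq V]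
    (G : SimpleGraph V) (hne : G.edgeSet.Nonempty) :
    (cms G : ℝ) ≤ (numEdges G : ℝ) / fracChromaticIndex G := by
  classical
  obtain ⟨e₀, he₀⟩ := hne
  have hfin : G.edgeSet.Finite := Set.toFinite _
  set m := numEdges G with hm_def
  -- every ordering has length m
  have hlen : ∀ L : List (Sym2 V), IsOrdering G L → L.length = m := by
    intro L ⟨hnd, hmem⟩
    have hto : L.toFinset = hfin.toFinset := by
      ext e; rw [List.mem_toFinset, Set.Finite.mem_toFinset, hmem]
    calc L.length = L.toFinset.card := (List.toFinset_card_of_nodup hnd).symm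
      _ = hfin.toFinset.card := by rw [hto]
      _ = m := by
          rw [hm_def, numEdges, Nat.card_eq_card_finite_toFinset hfin]
  have hm1 : 1 ≤ m := by
    rw [hm_def, numEdges]
    have : Nonempty G.edgeSet := ⟨⟨e₀, he₀⟩⟩
    exact Nat.one_le_iff_ne_zero.mpr (Nat.card_ne_zero.mpr ⟨this, inferInstance⟩)
  -- an ordering exists
  have hord0 : IsOrdering G hfin.toFinset.toList :=
    ⟨Finset.nodup_toList _, fun e => by rw [Finset.mem_toList, Set.Finite.mem_toFinset]⟩
  -- cmsList is bounded by the length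
  have hcms_le : ∀ L : List (Sym2 V), cmsList L ≤ L.length := by
    intro L
    rw [cmsList]
    rcases Set.eq_empty_or_nonempty {s | 1 ≤ s ∧ s ≤ L.length ∧ ∀ i j e e', i < j →
        L[i]? = some e → L[j]? = some e' → EdgesAdj e e' →
        s ≤ min (j - i) (L.length - (j - i))} with h | h
    · rw [h, csSup_empty]; exact Nat.zero_le _
    · exact csSup_le h (fun b hb => hb.2.1)
  -- cms G is attained by some ordering
  have hmem_cms : cms G ∈ {k | ∃ L, IsOrdering G L ∧ cmsList L = k} := by
    refine Nat.sSup_mem ⟨cmsList hfin.toFinset.toList, hfin.toFinset.toList, hord0, rfl⟩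
      ⟨m, fun k hk => ?_⟩
    obtain ⟨L, hL, rfl⟩ := hk
    exact (hcms_le L).trans (hlen L hL).le
  obtain ⟨L, hord, hLcms⟩ := hmem_cms
  have llen : L.length = m := hlen L hord
  -- the defining set of cmsList L contains its sSup
  set S : Set ℕ := {s | 1 ≤ s ∧ s ≤ L.length ∧ ∀ i j e e', i < j →
      L[i]? = some e → L[j]? = some e' → EdgesAdj e e' →
      s ≤ min (j - i) (L.length - (j - i))} with hS_def
  have hSmem : cmsList L ∈ S := by
    rw [cmsList, ← hS_def]
    apply Nat.sSup_mem
    · refine ⟨1, le_refl 1, by omega, fun i j e e' hij hi hj _ => ?_⟩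
      rw [List.getElem?_eq_some_iff] at hj
      obtain ⟨hjlen, -⟩ := hj
      omega
    · exact ⟨L.length, fun b hb => hb.2.1⟩
  rw [hLcms] at hSmem
  obtain ⟨hs1, hs2, hP⟩ := hSmem
  set s := cms G with hs_def
  rw [llen] at hs2
  -- cyclic windows
  set win : ℕ → Finset (Sym2 V) :=
    fun i => (Finset.range s).image (fun t => L.getD ((i + t) % m) e₀) with hwin_def
  have hm0 : 0 < m := hm1
  have hgetD : ∀ (a : ℕ) (ha : a < L.length), L.getD a e₀ = L[a] :=
    fun a ha => List.getD_eq_getElem L e₀ ha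
  -- each window is a matching
  have hwin_match : ∀ i, IsMatchingSet G (win i) := by
    intro i
    constructor
    · intro e he
      rw [Finset.mem_coe, hwin_def, Finset.mem_image] at he
      obtain ⟨t, -, rfl⟩ := he
      have hlt : (i + t) % m < L.length := by
        rw [llen]; exact Nat.mod_lt _ hm0
      rw [hgetD _ hlt]
      exact (hord.2 _).mp (List.getElem_mem hlt)
    · intro e he e' he' hadj
      rw [hwin_def, Finset.mem_image] at he he'
      obtain ⟨t, ht, hte⟩ := he
      obtain ⟨t', ht', hte'⟩ := he'
      rw [Finset.mem_range] at ht ht'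
      set a := (i + t) % m with ha_def
      set b := (i + t') % m with hb_def
      have halt : a < L.length := by rw [llen]; exact Nat.mod_lt _ hm0
      have hblt : b < L.length := by rw [llen]; exact Nat.mod_lt _ hm0
      rw [hgetD _ halt] at hte
      rw [hgetD _ hblt] at hte'
      rcases lt_trichotomy a b with hab | hab | hab
      · have h1 := hP a b e e' hab
          (hte ▸ List.getElem?_eq_getElem halt)
          (hte' ▸ List.getElem?_eq_getElem hblt) hadj
        have h2 := cms_arith_lt hm0 hs2 ht ht' ha_def hb_def hab
        rw [llen] at h1
        omega
      · refine hadj.1 ?_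
        rw [← hte, ← hte']
        congr 1
      · have h1 := hP b a e' e hab
          (hte' ▸ List.getElem?_eq_getElem hblt)
          (hte ▸ List.getElem?_eq_getElem halt) (edgesAdj_symm hadj)
        have h2 := cms_arith_lt hm0 hs2 ht' ht hb_def ha_def hab
        rw [llen] at h1
        omega
  -- the weight function
  set w : Finset (Sym2 V) → ℝ :=
    fun M => (((Finset.range m).filter (fun i => win i = M)).card : ℝ) / s with hw_def
  have hw_nonneg : ∀ M, 0 ≤ w M := fun M => by
    rw [hw_def]; positivity
  have hw_zero : ∀ M, ¬ IsMatchingSet G M → w M = 0 := by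
    intro M hM
    rw [hw_def]
    have : (Finset.range m).filter (fun i => win i = M) = ∅ := by
      rw [Finset.filter_eq_empty_iff]
      intro i _ hiM
      exact hM (hiM ▸ hwin_match i)
    simp [this]
  -- total weight
  have hw_total : ∑ M : Finset (Sym2 V), w M = (m : ℝ) / s := by
    rw [hw_def, ← Finset.sum_div]
    congr 1
    rw [← Nat.cast_sum]
    congr 1
    have := Finset.card_eq_sum_card_fiberwise
      (f := win) (s := Finset.range m) (t := Finset.univ) (fun x _ => Finset.mem_univ _)
    rw [Finset.card_range] at this
    exact this.symm
  -- each edge is covered with total weight at least 1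
  have hw_edge : ∀ e ∈ G.edgeSet,
      1 ≤ ∑ M ∈ Finset.univ.filter (fun M : Finset (Sym2 V) => e ∈ M), w M := by
    intro e he
    obtain ⟨j, hj, hje⟩ := List.mem_iff_getElem.mp ((hord.2 e).mpr he)
    have hjm : j < m := llen ▸ hj
    -- e belongs to at least s windows
    have hkey : s ≤ ((Finset.range m).filter (fun i => e ∈ win i)).card := by
      rw [← Finset.card_range s]
      apply Finset.card_le_card_of_injOn (fun t => (j + m - t) % m)
      · intro t htt
        rw [Finset.coe_range, Set.mem_Iio] at htt
        rw [Finset.mem_coe, Finset.mem_filter, Finset.mem_range]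
        refine ⟨Nat.mod_lt _ hm0, ?_⟩
        rw [hwin_def, Finset.mem_image]
        refine ⟨t, Finset.mem_range.mpr htt, ?_⟩
        have hidx : ((j + m - t) % m + t) % m = j := by
          rw [Nat.mod_add_mod]
          have : j + m - t + t = j + m := by omega
          rw [this, Nat.add_mod_right, Nat.mod_eq_of_lt hjm]
        rw [hidx, hgetD _ hj, hje]
      · intro t htt t' htt' hEq
        rw [Finset.coe_range, Set.mem_Iio] at htt htt'
        exact cms_arith_inj hm0 hs2 htt htt' hEq
    -- rewrite the sum of weights over matchings containing e
    have hfib : ((Finset.range m).filter (fun i => e ∈ win i)).card =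
        ∑ M ∈ Finset.univ.filter (fun M : Finset (Sym2 V) => e ∈ M),
          (((Finset.range m).filter (fun i => e ∈ win i)).filter (fun i => win i = M)).card :=
      Finset.card_eq_sum_card_fiberwise
        (fun x hx => by
          rw [Finset.mem_coe, Finset.mem_filter] at hx ⊢
          exact ⟨Finset.mem_univ _, hx.2⟩)
    have hfib2 : ∀ M ∈ Finset.univ.filter (fun M : Finset (Sym2 V) => e ∈ M),
        (((Finset.range m).filter (fun i => e ∈ win i)).filter (fun i => win i = M)) =
          (Finset.range m).filter (fun i => win i = M) := by
      intro M hM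
      rw [Finset.mem_filter] at hM
      ext i
      simp only [Finset.mem_filter, Finset.mem_range]
      constructor
      · rintro ⟨⟨h1, -⟩, h3⟩; exact ⟨h1, h3⟩
      · rintro ⟨h1, h3⟩; exact ⟨⟨h1, h3 ▸ hM.2⟩, h3⟩
    have hs0 : (0 : ℝ) < (s : ℝ) := by exact_mod_cast hs1
    calc (1 : ℝ) = (s : ℝ) / s := (div_self hs0.ne').symm
      _ ≤ (((Finset.range m).filter (fun i => e ∈ win i)).card : ℝ) / s := by
          gcongr
          
      _ = ∑ M ∈ Finset.univ.filter (fun M : Finset (Sym2 V) => e ∈ M), w M := by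
          rw [hw_def]
          simp only
          rw [← Finset.sum_div]
          congr 1
          rw [hfib, Nat.cast_sum]
          exact Finset.sum_congr rfl (fun M hM => by rw [hfib2 M hM])
  have hw_col : IsFracEdgeColouring G w := ⟨hw_nonneg, hw_zero, hw_edge⟩
  set X : Set ℝ := {x | ∃ w' : Finset (Sym2 V) → ℝ,
    IsFracEdgeColouring G w' ∧ ∑ M : Finset (Sym2 V), w' M = x} with hX_def
  have hmemX : ((m : ℝ) / s) ∈ X := ⟨w, hw_col, hw_total⟩
  have hbdd : ∀ x ∈ X, (1 : ℝ) ≤ x := by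
    rintro x ⟨w', ⟨hn, -, hc⟩, rfl⟩
    calc (1 : ℝ) ≤ ∑ M ∈ Finset.univ.filter (fun M : Finset (Sym2 V) => e₀ ∈ M), w' M :=
          hc e₀ he₀
      _ ≤ ∑ M : Finset (Sym2 V), w' M :=
          Finset.sum_le_sum_of_subset_of_nonneg (Finset.filter_subset _ _)
            (fun M _ _ => hn M)
  have h1 : (1 : ℝ) ≤ fracChromaticIndex G := by
    rw [fracChromaticIndex, ← hX_def]
    exact le_csInf ⟨_, hmemX⟩ hbdd
  have h2 : fracChromaticIndex G ≤ (m : ℝ) / s := by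
    rw [fracChromaticIndex, ← hX_def]
    exact csInf_le ⟨1, fun x hx => hbdd x hx⟩ hmemX
  have hcf0 : (0 : ℝ) < fracChromaticIndex G := lt_of_lt_of_le one_pos h1
  rw [le_div_iff₀ hcf0]
  have hs0 : (0 : ℝ) < (s : ℝ) := by exact_mod_cast hs1
  calc (s : ℝ) * fracChromaticIndex G ≤ (s : ℝ) * ((m : ℝ) / s) :=
        mul_le_mul_of_nonneg_left h2 hs0.le
    _ = (m : ℝ) := by field_simp
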